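/- Orthoplex bound: for any N n-dimensional subspaces P_1,...,P_N of R^m with N > m(m+1)/2, the minimum squared chordal distance satisfies min_{i≠j} d_c²(P_i,P_j) ≤ n(m−n)/m. -/

import Mathlib

open Matrix Module RealInnerProductSpace
open Module RealInnerProductSpace

theorem pairwise_neg_card (Nn : ℕ) :
    ∀ (E : Type) [NormedAddCommGroup E] [InnerProductSpace ℝ E] [FiniteDimensional ℝ E]
      (v : Fin Nn → E), (∀ i j, i ≠ j → ⟪v i, v j⟫ < 0) →
      Nn ≤ Module.finrank ℝ E + 1 := by
  induction Nn with
  | zero => intros; omega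
  | succ N ih =>
    intro E _ _ _ v hv
    rcases Nat.eq_zero_or_pos N with rfl | hNpos
    · omega
    set u := v (Fin.last N) with hu
    have h0last : (⟨0, by omega⟩ : Fin (N+1)) ≠ Fin.last N := by
      simp [Fin.ext_iff, Fin.last]; omega
    have hu0 : u ≠ 0 := by
      intro h
      have h2 := hv ⟨0, by omega⟩ (Fin.last N) h0last
      rw [← hu, h, inner_zero_right] at h2
      exact lt_irrefl _ h2
    have hnorm : (0:ℝ) < ‖u‖ := norm_pos_iff.mpr hu0
    have hnu : (0:ℝ) < ‖u‖^2 := by positivity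
    have hmem : ∀ i : Fin N,
        v i.castSucc - ((⟪u, v i.castSucc⟫) / ‖u‖^2) • u ∈ (ℝ ∙ u)ᗮ := by
      intro i
      rw [Submodule.mem_orthogonal_singleton_iff_inner_right]
      rw [inner_sub_right, real_inner_smul_right, real_inner_self_eq_norm_sq]
      field_simp
      ring
    set w : Fin N → ((ℝ ∙ u)ᗮ : Submodule ℝ E) := fun i => ⟨_, hmem i⟩ with hw
    have hne : ∀ i : Fin N, i.castSucc ≠ Fin.last N := fun i => (Fin.castSucc_lt_last i).ne
    have hwpair : ∀ i j, i ≠ j → ⟪w i, w j⟫ < 0 := by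
      intro i j hij
      have hab : ⟪v i.castSucc, v j.castSucc⟫ < 0 :=
        hv _ _ (by simpa [Fin.castSucc_inj] using hij)
      have hua : ⟪u, v i.castSucc⟫ < 0 := hv _ _ (hne i).symm
      have hub : ⟪u, v j.castSucc⟫ < 0 := hv _ _ (hne j).symm
      have hexp : ⟪w i, w j⟫ = ⟪v i.castSucc, v j.castSucc⟫ -
          ⟪u, v i.castSucc⟫ * ⟪u, v j.castSucc⟫ / ‖u‖^2 := by
        rw [hw]
        simp only [Submodule.coe_inner, inner_sub_left, inner_sub_right,
          real_inner_smul_left, real_inner_smul_right, real_inner_self_eq_norm_sq,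
          real_inner_comm (v i.castSucc) u]
        field_simp
        ring
      rw [hexp]
      have hpos : 0 < ⟪u, v i.castSucc⟫ * ⟪u, v j.castSucc⟫ / ‖u‖^2 :=
        div_pos (mul_pos_of_neg_of_neg hua hub) hnu
      linarith
    have hIH := ih _ w hwpair
    have hrank : finrank ℝ (ℝ ∙ u) = 1 := finrank_span_singleton hu0
    have hsum := Submodule.finrank_add_finrank_orthogonal (K := (ℝ ∙ u)) (𝕜 := ℝ) (E := E)
    omega
open Module

/-- The submodule of symmetric, traceless elements of `EuclideanSpace ℝ (Fin m × Fin m)`. -/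
def symTraceless (m : ℕ) : Submodule ℝ (EuclideanSpace ℝ (Fin m × Fin m)) where
  carrier := {f | (∀ a b : Fin m, f (a, b) = f (b, a)) ∧ ∑ i, f (i, i) = 0}
  add_mem' := by
    intro f g hf hg
    refine ⟨fun a b => ?_, ?_⟩
    · show f (a,b) + g (a,b) = f (b,a) + g (b,a)
      rw [hf.1 a b, hg.1 a b]
    · show ∑ i, (f (i,i) + g (i,i)) = 0
      rw [Finset.sum_add_distrib, hf.2, hg.2, add_zero]
  zero_mem' := by
    refine ⟨fun a b => rfl, ?_⟩
    show ∑ _i : Fin m, (0:ℝ) = 0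
    simp
  smul_mem' := by
    intro c f hf
    refine ⟨fun a b => ?_, ?_⟩
    · show c * f (a,b) = c * f (b,a)
      rw [hf.1 a b]
    · show ∑ i, c * f (i,i) = 0
      rw [← Finset.mul_sum, hf.2, mul_zero]

abbrev symIdx (m : ℕ) : Type :=
  {p : Fin m × Fin m // p.1 < p.2} ⊕ {i : Fin m // (i : ℕ) ≠ 0}

def offDiagEquiv (m : ℕ) : {p : Fin m × Fin m // p.1 < p.2} ≃ Σ b : Fin m, Fin b.1 where
  toFun p := ⟨p.1.2, ⟨p.1.1.1, p.2⟩⟩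
  invFun x := ⟨(⟨x.2.1, x.2.2.trans x.1.2⟩, x.1), x.2.2⟩
  left_inv := by intro p; rfl
  right_inv := by intro x; rfl

def diagEquiv (m : ℕ) : {i : Fin m // (i : ℕ) ≠ 0} ≃ Fin (m - 1) where
  toFun i := ⟨i.1.1 - 1, by have := i.1.2; have := i.2; omega⟩
  invFun j := ⟨⟨j.1 + 1, by have := j.2; omega⟩, by simp⟩
  left_inv := by
    intro i
    have := i.2
    ext
    simp
    omega
  right_inv := by intro j; simp

theorem card_symIdx (m : ℕ) : Fintype.card (symIdx m) = m * (m - 1) / 2 + (m - 1) := by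
  have h1 : Fintype.card {p : Fin m × Fin m // p.1 < p.2} = m * (m - 1) / 2 := by
    rw [Fintype.card_congr (offDiagEquiv m)]
    rw [Fintype.card_sigma]
    simp only [Fintype.card_fin]
    rw [Fin.sum_univ_eq_sum_range (fun k => k) m]
    have := Finset.sum_range_id_mul_two m
    omega
  have h2 : Fintype.card {i : Fin m // (i : ℕ) ≠ 0} = m - 1 := by
    rw [Fintype.card_congr (diagEquiv m), Fintype.card_fin]
  simp [symIdx, h1, h2]

/-- The restriction map sending a symmetric traceless array to its strictly-upper-triangular
entries together with its nonzero diagonal entries. -/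
noncomputable def restrictMap (m : ℕ) : (symTraceless m) →ₗ[ℝ] (symIdx m → ℝ) :=
  (LinearMap.pi fun x : symIdx m =>
    (LinearMap.proj (Sum.elim (fun p => p.1) (fun i => (i.1, i.1)) x) :
      ((Fin m × Fin m) → ℝ) →ₗ[ℝ] ℝ) ∘ₗ
      (WithLp.linearEquiv 2 ℝ ((Fin m × Fin m) → ℝ)).toLinearMap).comp
    (symTraceless m).subtype

theorem restrictMap_injective (m : ℕ) : Function.Injective (restrictMap m) := by
  rw [← LinearMap.ker_eq_bot, LinearMap.ker_eq_bot']
  intro f hf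
  have hf' : ∀ x : symIdx m, (f : EuclideanSpace ℝ (Fin m × Fin m))
      (Sum.elim (fun p => p.1) (fun i => (i.1, i.1)) x) = 0 := by
    intro x
    simpa [restrictMap] using congrFun hf x
  have hsymm := f.2.1
  have htr := f.2.2
  have hupper : ∀ a b : Fin m, a < b → (f : EuclideanSpace ℝ (Fin m × Fin m)) (a, b) = 0 := by
    intro a b h
    exact hf' (Sum.inl ⟨(a, b), h⟩)
  have hdiag : ∀ i : Fin m, (i : ℕ) ≠ 0 → (f : EuclideanSpace ℝ (Fin m × Fin m)) (i, i) = 0 := by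
    intro i h
    exact hf' (Sum.inr ⟨i, h⟩)
  have hall : ∀ p : Fin m × Fin m, (f : EuclideanSpace ℝ (Fin m × Fin m)) p = 0 := by
    intro ⟨a, b⟩
    rcases lt_trichotomy a b with h | h | h
    · exact hupper a b h
    · subst h
      rcases Nat.eq_zero_or_pos (a : ℕ) with ha | ha
    -- diagonal zero entry: use trace
      · have hsum : ∑ i, (f : EuclideanSpace ℝ (Fin m × Fin m)) (i, i)
            = (f : EuclideanSpace ℝ (Fin m × Fin m)) (a, a) := by
          apply Finset.sum_eq_single a
          · intro i _ hi
            apply hdiag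
            intro h0
            exact hi (Fin.ext (h0.trans ha.symm))
          · intro h; exact absurd (Finset.mem_univ a) h
        rw [← hsum, htr]
      · exact hdiag a (by omega)
    · rw [hsymm a b]
      exact hupper b a h
  ext1
  refine PiLp.ext fun p => ?_
  exact hall p

theorem finrank_symTraceless_le (m : ℕ) :
    finrank ℝ (symTraceless m) ≤ m * (m - 1) / 2 + (m - 1) := by
  have := LinearMap.finrank_le_finrank_of_injective (restrictMap_injective m)
  rwa [Module.finrank_pi, card_symIdx] at this


/-- Orthoplex bound: for `N > m(m+1)/2` `n`-dimensional subspaces of `ℝ^m`, given by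
their orthogonal projection matrices `P i` (symmetric idempotents of trace `n`),
some pair has squared chordal distance `n - trace (P i * P j)` at most
`n(m-n)/m`. -/
theorem orthoplex_bound (n m N : ℕ) (hm : 0 < m) (hnm : n ≤ m)
    (hN : m * (m + 1) / 2 < N)
    (P : Fin N → Matrix (Fin m) (Fin m) ℝ)
    (hsymm : ∀ i, (P i)ᵀ = P i)
    (hidem : ∀ i, P i * P i = P i)
    (htr : ∀ i, Matrix.trace (P i) = (n : ℝ)) :
    ∃ i j, i ≠ j ∧
      (n : ℝ) - Matrix.trace (P i * P j) ≤ (n : ℝ) * ((m : ℝ) - n) / m := by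
  by_contra hcon
  push_neg at hcon
  have hmR : (0:ℝ) < m := by exact_mod_cast hm
  have hmne : (m:ℝ) ≠ 0 := hmR.ne'
  set c : ℝ := n / m with hc
  set X : Fin N → Matrix (Fin m) (Fin m) ℝ := fun i => P i - c • 1 with hX
  have hXsymm : ∀ i a b, X i a b = X i b a := by
    intro i a b
    have h1 : P i b a = P i a b := by
      conv_rhs => rw [← hsymm i]
      rw [Matrix.transpose_apply]
    by_cases hab : a = b
    · subst hab; rfl
    · simp only [hX, Matrix.sub_apply, Matrix.smul_apply,
        Matrix.one_apply_ne hab, Matrix.one_apply_ne (Ne.symm hab), h1]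
  have htrX : ∀ i, Matrix.trace (X i) = 0 := by
    intro i
    simp only [hX, Matrix.trace_sub, Matrix.trace_smul, Matrix.trace_one, htr,
      smul_eq_mul, Fintype.card_fin, hc]
    field_simp
    ring
  set y : Fin N → EuclideanSpace ℝ (Fin m × Fin m) :=
    fun i => WithLp.toLp 2 (fun p : Fin m × Fin m => X i p.1 p.2) with hy
  have hmem : ∀ i, y i ∈ symTraceless m := by
    intro i
    refine ⟨fun a b => hXsymm i a b, ?_⟩
    show ∑ a, X i a a = 0
    rw [← htrX i]
    simp [Matrix.trace, Matrix.diag]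
  have hinner : ∀ i j, ⟪y i, y j⟫ = Matrix.trace (P i * P j) - (n:ℝ)^2 / m := by
    intro i j
    have h1 : ⟪y i, y j⟫ = ∑ p : Fin m × Fin m, X i p.1 p.2 * X j p.1 p.2 := by
      simp [hy, PiLp.inner_apply, RCLike.inner_apply, starRingEnd_apply, star_trivial, mul_comm]
    have h2 : ∑ p : Fin m × Fin m, X i p.1 p.2 * X j p.1 p.2
        = Matrix.trace (X i * X j) := by
      rw [Fintype.sum_prod_type, Matrix.trace]
      simp only [Matrix.diag, Matrix.mul_apply]
      refine Finset.sum_congr rfl fun a _ => Finset.sum_congr rfl fun b _ => ?_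
      rw [hXsymm j a b]
    have h3 : Matrix.trace (X i * X j) = Matrix.trace (P i * P j) - (n:ℝ)^2 / m := by
      simp only [hX, Matrix.sub_mul, Matrix.mul_sub, Matrix.smul_mul, Matrix.mul_smul,
        Matrix.one_mul, Matrix.mul_one, Matrix.trace_sub, Matrix.trace_smul,
        Matrix.trace_one, smul_smul, smul_eq_mul, htr, Fintype.card_fin, hc]
      field_simp
      ring
    rw [h1, h2, h3]
  have hneg : ∀ i j : Fin N, i ≠ j → ⟪y i, y j⟫ < 0 := by
    intro i j hij
    have h1 := hcon i j hij
    have hid : (n:ℝ) - (n:ℝ) * ((m:ℝ) - n) / m = (n:ℝ)^2 / m := by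
      field_simp; ring
    rw [hinner i j]
    linarith
  set v' : Fin N → symTraceless m := fun i => ⟨y i, hmem i⟩ with hv'
  have hpair : ∀ i j : Fin N, i ≠ j → ⟪v' i, v' j⟫ < 0 := by
    intro i j hij
    rw [hv']
    rw [Submodule.coe_inner]
    exact hneg i j hij
  have hcard := pairwise_neg_card N (symTraceless m) v' hpair
  have hfin := finrank_symTraceless_le m
  obtain ⟨k, rfl⟩ : ∃ k, m = k + 1 := ⟨m - 1, by omega⟩
  rw [Nat.add_sub_cancel] at hfin
  have heven : ((k+1) * k) % 2 = 0 := by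
    have h := Nat.even_mul_succ_self k
    rw [Nat.even_iff] at h
    rw [mul_comm]
    exact h
  have hb : (k+1) * (k+1+1) = (k+1) * k + 2 * (k+1) := by ring
  generalize hA : (k+1) * k = a at heven hb hfin
  generalize hB : (k+1) * (k+1+1) = b at hb hN
  omega
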